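/- arXiv:1101.3499 — 3 statements merged into one kernel-verified Lean document; each statement's English description precedes it below -/
import Mathlib

section
/- The generalised energy e(v,u) := (d/2)·λ_max(v⊗v − u) is a convex function of (v,u) ∈ ℝ^d × S₀^d. -/
/-- The largest eigenvalue of a real symmetric matrix. -/
noncomputable def lambdaMax {d : ℕ} (A : Matrix (Fin d) (Fin d) ℝ) : ℝ :=
  sSup {μ : ℝ | ∃ x : Fin d → ℝ, x ≠ 0 ∧ A.mulVec x = μ • x}

/-- The generalised energy `e(v,u) = (d/2) λ_max(v ⊗ v - u)`. -/
noncomputable def genE {d : ℕ} (v : Fin d → ℝ) (u : Matrix (Fin d) (Fin d) ℝ) : ℝ :=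
  ((d : ℝ) / 2) * lambdaMax (Matrix.vecMulVec v v - u)

open Matrix Finset

section aux

variable {d : ℕ}

/-- view a plain vector as an element of Euclidean space -/
noncomputable def toE (x : Fin d → ℝ) : EuclideanSpace ℝ (Fin d) :=
  (WithLp.equiv 2 (Fin d → ℝ)).symm x

lemma isHerm_of_isSymm {A : Matrix (Fin d) (Fin d) ℝ} (h : A.IsSymm) : A.IsHermitian := by
  ext i j
  rw [Matrix.conjTranspose_apply, star_trivial, h.apply]

lemma dot_decomp {A : Matrix (Fin d) (Fin d) ℝ} (hA : A.IsHermitian) (x : Fin d → ℝ) :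
    x ⬝ᵥ (A *ᵥ x) = ∑ i, hA.eigenvalues i * (hA.eigenvectorBasis.repr (toE x) i)^2 := by
  classical
  set B := hA.eigenvectorBasis with hB
  set c : Fin d → ℝ := fun i => B.repr (toE x) i with hc
  have hx : x = ∑ i, c i • (WithLp.equiv 2 (Fin d → ℝ) (B i)) := by
    have h := congrArg WithLp.ofLp (B.sum_repr (toE x)).symm
    rw [WithLp.ofLp_sum] at h
    exact h
  have h2 : A *ᵥ x = ∑ i, (hA.eigenvalues i * c i) • (WithLp.equiv 2 (Fin d → ℝ) (B i)) := by
    conv_lhs => rw [hx]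
    rw [← Matrix.mulVecLin_apply, map_sum]
    refine Finset.sum_congr rfl fun i _ => ?_
    rw [LinearMap.map_smul, Matrix.mulVecLin_apply, WithLp.equiv_apply, hA.mulVec_eigenvectorBasis, smul_smul,
      mul_comm]
  have horth := B.orthonormal
  have key : (inner ℝ (toE x) (toE (A *ᵥ x)) : ℝ) = ∑ i, c i * (hA.eigenvalues i * c i) := by
    have hx' : toE x = ∑ i, c i • B i := (B.sum_repr (toE x)).symm
    have h2' : toE (A *ᵥ x) = ∑ i, (hA.eigenvalues i * c i) • B i := by
      rw [h2]; simp [toE, WithLp.toLp_sum]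
    rw [hx', h2']
    simpa using horth.inner_sum c (fun i => hA.eigenvalues i * c i) Finset.univ
  have hdot : x ⬝ᵥ (A *ᵥ x) = (inner ℝ (toE x) (toE (A *ᵥ x)) : ℝ) := by
    simp [toE, dotProduct, PiLp.inner_apply]
    exact Finset.sum_congr rfl fun _ _ => mul_comm _ _
  rw [hdot, key]
  exact Finset.sum_congr rfl fun i _ => by ring

lemma dot_self_decomp {A : Matrix (Fin d) (Fin d) ℝ} (hA : A.IsHermitian) (x : Fin d → ℝ) :
    x ⬝ᵥ x = ∑ i, (hA.eigenvectorBasis.repr (toE x) i)^2 := by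
  have h : x ⬝ᵥ x = (inner ℝ (toE x) (toE x) : ℝ) := by
    rw [PiLp.inner_apply]
    simp [toE, dotProduct, sq]
  rw [h, ← hA.eigenvectorBasis.repr.inner_map_map (toE x) (toE x)]
  simp only [PiLp.inner_apply, RCLike.inner_apply, conj_trivial, sq]

end aux

section aux2

variable {d : ℕ}

/-- top eigenvalue -/
noncomputable def maxEig {A : Matrix (Fin d) (Fin d) ℝ} (hA : A.IsHermitian) : ℝ :=
  ⨆ i, hA.eigenvalues i

lemma rayleigh (hd : 0 < d) {A : Matrix (Fin d) (Fin d) ℝ} (hA : A.IsHermitian)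
    (x : Fin d → ℝ) : x ⬝ᵥ (A *ᵥ x) ≤ maxEig hA * (x ⬝ᵥ x) := by
  haveI : Nonempty (Fin d) := ⟨⟨0, hd⟩⟩
  rw [dot_decomp hA x, dot_self_decomp hA x, Finset.mul_sum]
  refine Finset.sum_le_sum fun i _ => ?_
  have h1 : hA.eigenvalues i ≤ maxEig hA :=
    le_ciSup (Set.Finite.bddAbove (Set.finite_range _)) i
  nlinarith [sq_nonneg (hA.eigenvectorBasis.repr (toE x) i)]

lemma mem_spec {A : Matrix (Fin d) (Fin d) ℝ} (hA : A.IsHermitian) (i : Fin d) :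
    hA.eigenvalues i ∈ {μ : ℝ | ∃ x : Fin d → ℝ, x ≠ 0 ∧ A.mulVec x = μ • x} := by
  refine ⟨WithLp.equiv 2 (Fin d → ℝ) (hA.eigenvectorBasis i), ?_,
    hA.mulVec_eigenvectorBasis i⟩
  have h0 : hA.eigenvectorBasis i ≠ 0 := hA.eigenvectorBasis.orthonormal.ne_zero i
  simpa using fun h => h0 ((WithLp.equiv 2 (Fin d → ℝ)).injective (by simpa using h))

lemma lambdaMax_eq (hd : 0 < d) {A : Matrix (Fin d) (Fin d) ℝ} (hA : A.IsHermitian) :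
    lambdaMax A = maxEig hA := by
  haveI : Nonempty (Fin d) := ⟨⟨0, hd⟩⟩
  have hub : ∀ μ ∈ {μ : ℝ | ∃ x : Fin d → ℝ, x ≠ 0 ∧ A.mulVec x = μ • x}, μ ≤ maxEig hA := by
    rintro μ ⟨x, hx0, hx⟩
    have h := rayleigh hd hA x
    rw [hx, dotProduct_smul, smul_eq_mul] at h
    have h0 : x ⬝ᵥ x ≠ 0 := fun hz => hx0 (dotProduct_self_eq_zero.mp hz)
    have hnn : 0 ≤ x ⬝ᵥ x := Finset.sum_nonneg fun j _ => mul_self_nonneg _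
    have hpos : 0 < x ⬝ᵥ x := hnn.lt_of_ne (Ne.symm h0)
    exact le_of_mul_le_mul_right h hpos
  refine le_antisymm (csSup_le ⟨_, mem_spec hA ⟨0, hd⟩⟩ hub) ?_
  obtain ⟨i, hi⟩ := exists_eq_ciSup_of_finite (f := hA.eigenvalues)
  rw [maxEig, ← hi]
  exact le_csSup ⟨maxEig hA, hub⟩ (mem_spec hA i)

lemma herm_energy (v : Fin d → ℝ) {u : Matrix (Fin d) (Fin d) ℝ} (hu : u.IsSymm) :
    (Matrix.vecMulVec v v - u).IsHermitian := by
  refine isHerm_of_isSymm ?_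
  have h1 : (Matrix.vecMulVec v v).IsSymm := by
    ext i j
    simp [Matrix.vecMulVec_apply, mul_comm]
  rw [Matrix.IsSymm, Matrix.transpose_sub, h1, hu]

lemma dot_energy (v : Fin d → ℝ) (u : Matrix (Fin d) (Fin d) ℝ) (x : Fin d → ℝ) :
    x ⬝ᵥ ((Matrix.vecMulVec v v - u) *ᵥ x) = (v ⬝ᵥ x)^2 - x ⬝ᵥ (u *ᵥ x) := by
  rw [Matrix.sub_mulVec, dotProduct_sub]
  congr 1
  have h : Matrix.vecMulVec v v *ᵥ x = (v ⬝ᵥ x) • v := by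
    ext i
    simp only [Matrix.mulVec, Matrix.vecMulVec_apply, dotProduct, Pi.smul_apply, smul_eq_mul]
    rw [Finset.sum_mul]
    exact Finset.sum_congr rfl fun j _ => by ring
  rw [h, dotProduct_smul, smul_eq_mul, dotProduct_comm, sq]

end aux2

theorem stmt_1 {d : ℕ} (hd : 2 ≤ d)
    (v₁ v₂ : Fin d → ℝ) (u₁ u₂ : Matrix (Fin d) (Fin d) ℝ)
    (hu₁s : u₁.IsSymm) (hu₂s : u₂.IsSymm)
    (hu₁t : u₁.trace = 0) (hu₂t : u₂.trace = 0)
    (t : ℝ) (ht₀ : 0 ≤ t) (ht₁ : t ≤ 1) :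
    genE (t • v₁ + (1 - t) • v₂) (t • u₁ + (1 - t) • u₂)
      ≤ t * genE v₁ u₁ + (1 - t) * genE v₂ u₂ := by
  have hd0 : 0 < d := lt_of_lt_of_le two_pos hd
  haveI : Nonempty (Fin d) := ⟨⟨0, hd0⟩⟩
  set w : Fin d → ℝ := t • v₁ + (1 - t) • v₂ with hw
  set U : Matrix (Fin d) (Fin d) ℝ := t • u₁ + (1 - t) • u₂ with hU
  have hUs : U.IsSymm := by
    rw [Matrix.IsSymm, hU, Matrix.transpose_add, Matrix.transpose_smul, Matrix.transpose_smul,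
      hu₁s, hu₂s]
  have hA : (Matrix.vecMulVec w w - U).IsHermitian := herm_energy w hUs
  have hA₁ : (Matrix.vecMulVec v₁ v₁ - u₁).IsHermitian := herm_energy v₁ hu₁s
  have hA₂ : (Matrix.vecMulVec v₂ v₂ - u₂).IsHermitian := herm_energy v₂ hu₂s
  have key : lambdaMax (Matrix.vecMulVec w w - U)
      ≤ t * lambdaMax (Matrix.vecMulVec v₁ v₁ - u₁)
        + (1 - t) * lambdaMax (Matrix.vecMulVec v₂ v₂ - u₂) := by
    rw [lambdaMax_eq hd0 hA, lambdaMax_eq hd0 hA₁, lambdaMax_eq hd0 hA₂]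
    obtain ⟨i, hi⟩ := exists_eq_ciSup_of_finite (f := hA.eigenvalues)
    set x : Fin d → ℝ := WithLp.equiv 2 (Fin d → ℝ) (hA.eigenvectorBasis i) with hxdef
    have hxx : x ⬝ᵥ x = 1 := by
      have hn : ‖hA.eigenvectorBasis i‖ = 1 := hA.eigenvectorBasis.orthonormal.1 i
      have h2 : (inner ℝ (hA.eigenvectorBasis i) (hA.eigenvectorBasis i) : ℝ) = 1 := by
        rw [real_inner_self_eq_norm_sq, hn]; norm_num
      rw [← h2, PiLp.inner_apply]
      simp [hxdef, dotProduct, sq]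
    have hev : maxEig hA = x ⬝ᵥ ((Matrix.vecMulVec w w - U) *ᵥ x) := by
      have hm : (Matrix.vecMulVec w w - U) *ᵥ x = hA.eigenvalues i • x :=
        hA.mulVec_eigenvectorBasis i
      rw [hm, dotProduct_smul, smul_eq_mul, hxx, mul_one, maxEig, ← hi]
    have e0 := dot_energy w U x
    have e1 := dot_energy v₁ u₁ x
    have e2 := dot_energy v₂ u₂ x
    have r1 : x ⬝ᵥ ((Matrix.vecMulVec v₁ v₁ - u₁) *ᵥ x) ≤ maxEig hA₁ := by
      have := rayleigh hd0 hA₁ x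
      rwa [hxx, mul_one] at this
    have r2 : x ⬝ᵥ ((Matrix.vecMulVec v₂ v₂ - u₂) *ᵥ x) ≤ maxEig hA₂ := by
      have := rayleigh hd0 hA₂ x
      rwa [hxx, mul_one] at this
    have hwx : w ⬝ᵥ x = t * (v₁ ⬝ᵥ x) + (1 - t) * (v₂ ⬝ᵥ x) := by
      rw [hw, add_dotProduct, smul_dotProduct, smul_dotProduct, smul_eq_mul, smul_eq_mul]
    have hUx : x ⬝ᵥ (U *ᵥ x) = t * (x ⬝ᵥ (u₁ *ᵥ x)) + (1 - t) * (x ⬝ᵥ (u₂ *ᵥ x)) := by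
      rw [hU, Matrix.add_mulVec, Matrix.smul_mulVec, Matrix.smul_mulVec,
        dotProduct_add, dotProduct_smul, dotProduct_smul, smul_eq_mul, smul_eq_mul]
    have hsq : (w ⬝ᵥ x)^2 ≤ t * (v₁ ⬝ᵥ x)^2 + (1 - t) * (v₂ ⬝ᵥ x)^2 := by
      rw [hwx]
      nlinarith [sq_nonneg ((v₁ ⬝ᵥ x) - (v₂ ⬝ᵥ x)), mul_nonneg ht₀ (sub_nonneg.mpr ht₁)]
    have g1 : t * (x ⬝ᵥ ((Matrix.vecMulVec v₁ v₁ - u₁) *ᵥ x)) ≤ t * maxEig hA₁ :=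
      mul_le_mul_of_nonneg_left r1 ht₀
    have g2 : (1 - t) * (x ⬝ᵥ ((Matrix.vecMulVec v₂ v₂ - u₂) *ᵥ x)) ≤ (1 - t) * maxEig hA₂ :=
      mul_le_mul_of_nonneg_left r2 (by linarith)
    rw [hev, e0]
    rw [e1] at g1
    rw [e2] at g2
    linarith
  have hpos : (0:ℝ) ≤ (d : ℝ) / 2 := by positivity
  simp only [genE]
  nlinarith [key]
end

section
/- For every (v,u) ∈ ℝ^d × S₀^d one has |v|²/2 ≤ e(v,u), with equality if and only if u = v⊗v − (|v|²/d)·I_d. -/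
open Matrix in
lemma eigSet_eq {d : ℕ} {A : Matrix (Fin d) (Fin d) ℝ} (hA : A.IsHermitian) :
    {μ : ℝ | ∃ x : Fin d → ℝ, x ≠ 0 ∧ A.mulVec x = μ • x} = Set.range hA.eigenvalues := by
  ext μ
  simp only [Set.mem_setOf_eq, Set.mem_range]
  constructor
  · rintro ⟨x, hx, hAx⟩
    by_contra hμ
    push_neg at hμ
    apply hx
    have hsymm : ∀ a b : Fin d → ℝ, a ⬝ᵥ (A *ᵥ b) = (A *ᵥ a) ⬝ᵥ b := by
      intro a b
      simp only [dotProduct, mulVec, dotProduct, Finset.mul_sum, Finset.sum_mul]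
      rw [Finset.sum_comm]
      refine Finset.sum_congr rfl fun j _ => Finset.sum_congr rfl fun k _ => ?_
      have h : A j k = A k j := by simpa using hA.apply k j
      rw [h]; ring
    have key : ∀ i, ⇑(hA.eigenvectorBasis i) ⬝ᵥ x = 0 := by
      intro i
      have h1 : ⇑(hA.eigenvectorBasis i) ⬝ᵥ (A *ᵥ x) = μ * (⇑(hA.eigenvectorBasis i) ⬝ᵥ x) := by
        rw [hAx, dotProduct_smul, smul_eq_mul]
      have h2 : ⇑(hA.eigenvectorBasis i) ⬝ᵥ (A *ᵥ x)
          = hA.eigenvalues i * (⇑(hA.eigenvectorBasis i) ⬝ᵥ x) := by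
        rw [hsymm, hA.mulVec_eigenvectorBasis, smul_dotProduct, smul_eq_mul]
      have h3 : (hA.eigenvalues i - μ) * (⇑(hA.eigenvectorBasis i) ⬝ᵥ x) = 0 := by
        rw [sub_mul, ← h1, ← h2, sub_self]
      exact (mul_eq_zero.mp h3).resolve_left (sub_ne_zero.mpr (hμ i))
    have hy : (WithLp.toLp 2 x : EuclideanSpace ℝ (Fin d)) = 0 := by
      apply hA.eigenvectorBasis.repr.injective
      ext i
      rw [map_zero]
      rw [hA.eigenvectorBasis.repr_apply_apply]
      have := key i
      simp only [dotProduct] at this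
      simpa [PiLp.inner_apply, EuclideanSpace, mul_comm] using this
    funext i
    exact congrArg (fun y : EuclideanSpace ℝ (Fin d) => y i) hy
  · rintro ⟨i, rfl⟩
    refine ⟨⇑(hA.eigenvectorBasis i), ?_, hA.mulVec_eigenvectorBasis i⟩
    intro h0
    exact hA.eigenvectorBasis.orthonormal.ne_zero i (by ext j; exact congrFun h0 j)

open Matrix in
lemma trace_eq_sum_eigs {d : ℕ} {A : Matrix (Fin d) (Fin d) ℝ} (hA : A.IsHermitian) :
    A.trace = ∑ i, hA.eigenvalues i := by
  conv_lhs => rw [hA.spectral_theorem]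
  rw [Unitary.conjStarAlgAut_apply, Matrix.trace_mul_cycle,
    Matrix.mem_unitaryGroup_iff'.mp (hA.eigenvectorUnitary).2, one_mul, Matrix.trace_diagonal]
  simp [Function.comp]

theorem stmt_2 {d : ℕ} (hd : 2 ≤ d)
    (v : Fin d → ℝ) (u : Matrix (Fin d) (Fin d) ℝ)
    (hus : u.IsSymm) (hut : u.trace = 0) :
    (∑ i, v i ^ 2) / 2 ≤ genE v u ∧
      ((∑ i, v i ^ 2) / 2 = genE v u ↔
        u = Matrix.vecMulVec v v - ((∑ i, v i ^ 2) / d) • (1 : Matrix (Fin d) (Fin d) ℝ)) := by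
  have hd0 : (0 : ℝ) < d := by exact_mod_cast Nat.lt_of_lt_of_le Nat.zero_lt_two hd
  set S : ℝ := ∑ i, v i ^ 2 with hS
  set A : Matrix (Fin d) (Fin d) ℝ := Matrix.vecMulVec v v - u with hAdef
  have hA : A.IsHermitian := by
    rw [Matrix.IsHermitian, Matrix.conjTranspose_eq_transpose_of_trivial]
    apply Matrix.IsSymm.ext
    intro i j
    have hu := Matrix.IsSymm.ext_iff.mp hus i j
    simp [hAdef, Matrix.sub_apply, Matrix.vecMulVec_apply, mul_comm, hu]
  have htr : A.trace = S := by
    rw [hAdef, Matrix.trace_sub, hut, sub_zero, hS]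
    simp [Matrix.trace, Matrix.diag, Matrix.vecMulVec_apply, sq]
  have hsum : ∑ i, hA.eigenvalues i = S := by rw [← trace_eq_sum_eigs hA, htr]
  have hgen : genE v u = ((d : ℝ) / 2) * lambdaMax A := rfl
  have hLdef : lambdaMax A = sSup (Set.range hA.eigenvalues) := by
    rw [lambdaMax, eigSet_eq hA]
  have hfin : (Set.range hA.eigenvalues).Finite := Set.finite_range _
  have hne : (Set.range hA.eigenvalues).Nonempty := by
    have : Nonempty (Fin d) := ⟨⟨0, by omega⟩⟩
    exact Set.range_nonempty _
  have hle : ∀ i, hA.eigenvalues i ≤ lambdaMax A := by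
    intro i
    rw [hLdef]
    exact le_csSup hfin.bddAbove ⟨i, rfl⟩
  have hmem : ∃ i, hA.eigenvalues i = lambdaMax A := by
    have := hne.csSup_mem hfin
    rw [← hLdef] at this
    exact this
  have hSle : S ≤ (d : ℝ) * lambdaMax A := by
    calc S = ∑ i, hA.eigenvalues i := hsum.symm
    _ ≤ ∑ _i : Fin d, lambdaMax A := Finset.sum_le_sum fun i _ => hle i
    _ = (d : ℝ) * lambdaMax A := by simp [mul_comm]
  constructor
  · rw [hgen]; nlinarith
  constructor
  · intro heq
    rw [hgen] at heq
    have h2 : S = (d : ℝ) * lambdaMax A := by linarith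
    have hall : ∀ i, hA.eigenvalues i = lambdaMax A := by
      have hzero : ∑ i, (lambdaMax A - hA.eigenvalues i) = 0 := by
        rw [Finset.sum_sub_distrib, hsum, Finset.sum_const]
        simp only [Finset.card_univ, Fintype.card_fin, nsmul_eq_mul]
        linarith
      intro i
      have := (Finset.sum_eq_zero_iff_of_nonneg
        (fun i _ => sub_nonneg.mpr (hle i))).mp hzero i (Finset.mem_univ i)
      linarith
    have hDiag : Matrix.diagonal (RCLike.ofReal ∘ hA.eigenvalues)
        = lambdaMax A • (1 : Matrix (Fin d) (Fin d) ℝ) := by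
      have he : hA.eigenvalues = fun _ => lambdaMax A := funext hall
      rw [he, Matrix.smul_one_eq_diagonal]
      simp [Function.comp]
    have hA1 : A = lambdaMax A • (1 : Matrix (Fin d) (Fin d) ℝ) := by
      conv_lhs => rw [hA.spectral_theorem]
      rw [Unitary.conjStarAlgAut_apply, hDiag, Matrix.mul_smul, Matrix.smul_mul, Matrix.mul_one,
        Matrix.mem_unitaryGroup_iff.mp (hA.eigenvectorUnitary).2]
    have hlam : lambdaMax A = S / d := by field_simp [h2]; linarith
    have : u = Matrix.vecMulVec v v - A := by rw [hAdef]; abel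
    rw [this, hA1, hlam]
  · intro hu
    have hAc : A = (S / d) • (1 : Matrix (Fin d) (Fin d) ℝ) := by
      rw [hAdef, hu]; abel
    have hset : {μ : ℝ | ∃ x : Fin d → ℝ, x ≠ 0 ∧ A.mulVec x = μ • x} = {S / d} := by
      ext μ
      simp only [Set.mem_setOf_eq, Set.mem_singleton_iff]
      constructor
      · rintro ⟨x, hx, hμ⟩
        obtain ⟨j, hj⟩ := Function.ne_iff.mp hx
        have h := congrFun hμ j
        rw [hAc] at h
        simp only [Matrix.smul_mulVec, Matrix.one_mulVec, Pi.smul_apply,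
          smul_eq_mul] at h
        exact (mul_right_cancel₀ (by simpa using hj) h.symm)
      · rintro rfl
        refine ⟨Pi.single ⟨0, by omega⟩ 1, ?_, ?_⟩
        · intro h0
          have := congrFun h0 ⟨0, by omega⟩
          simp [Pi.single_eq_same] at this
        · rw [hAc]
          rw [Matrix.smul_mulVec, Matrix.one_mulVec]
    have hlm : lambdaMax A = S / d := by rw [lambdaMax, hset, csSup_singleton]
    rw [hgen, hlm]
    field_simp
end

section
/- For every (v,u) ∈ ℝ^d × S₀^d, the operator norm of u satisfies |u|_∞ ≤ 2·((d−1)/d)·e(v,u). In particular e(v,u) ≥ 0. -/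
section Aux

open Matrix

variable {d : ℕ}

private lemma aux_eigen_set (A : Matrix (Fin d) (Fin d) ℝ) (hA : A.IsHermitian) :
    {μ : ℝ | ∃ x : Fin d → ℝ, x ≠ 0 ∧ A.mulVec x = μ • x} = Set.range hA.eigenvalues := by
  ext μ
  constructor
  · rintro ⟨x, hx, hAx⟩
    rw [← hA.spectrum_real_eq_range_eigenvalues,
      ← AlgEquiv.spectrum_eq (Matrix.toLinAlgEquiv' (R := ℝ) (n := Fin d)),
      ← Module.End.hasEigenvalue_iff_mem_spectrum]
    exact Module.End.hasEigenvalue_of_hasEigenvector ⟨Module.End.mem_eigenspace_iff.2 (by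
      simpa [Matrix.toLinAlgEquiv'_apply] using hAx), hx⟩
  · rintro ⟨i, rfl⟩
    refine ⟨⇑(hA.eigenvectorBasis i), ?_, hA.mulVec_eigenvectorBasis i⟩
    intro h
    exact hA.eigenvectorBasis.toBasis.ne_zero i (by ext j; exact congrFun h j)

private lemma aux_quad_eq (A : Matrix (Fin d) (Fin d) ℝ) (hA : A.IsHermitian) (x : Fin d → ℝ) :
    ∃ y : Fin d → ℝ, x ⬝ᵥ (A *ᵥ x) = ∑ i, hA.eigenvalues i * (y i)^2 ∧
      x ⬝ᵥ x = ∑ i, (y i)^2 := by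
  set U : Matrix (Fin d) (Fin d) ℝ := (hA.eigenvectorUnitary : Matrix (Fin d) (Fin d) ℝ) with hU
  have hmem : U ∈ Matrix.unitaryGroup (Fin d) ℝ := hA.eigenvectorUnitary.2
  have h1 : U * star U = 1 := Matrix.mem_unitaryGroup_iff.mp hmem
  have hAd : A = U * Matrix.diagonal hA.eigenvalues * star U := by
    conv_lhs => rw [hA.spectral_theorem]
    congr
  set y : Fin d → ℝ := star U *ᵥ x with hy
  have hs : y = x ᵥ* U := by
    rw [hy, Matrix.star_eq_conjTranspose, Matrix.conjTranspose_eq_transpose_of_trivial,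
      Matrix.mulVec_transpose]
  have hxU : ∀ w : Fin d → ℝ, x ⬝ᵥ (U *ᵥ w) = y ⬝ᵥ w := by
    intro w; rw [dotProduct_mulVec, hs]
  have h2 : U *ᵥ y = x := by rw [hy, Matrix.mulVec_mulVec, h1, Matrix.one_mulVec]
  refine ⟨y, ?_, ?_⟩
  · have hAx : A *ᵥ x = U *ᵥ (Matrix.diagonal hA.eigenvalues *ᵥ y) := by
      rw [hy, Matrix.mulVec_mulVec, Matrix.mulVec_mulVec, ← hAd]
    rw [hAx, hxU, dotProduct]
    refine Finset.sum_congr rfl fun i _ => ?_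
    rw [Matrix.mulVec_diagonal]; ring
  · rw [show x ⬝ᵥ x = y ⬝ᵥ y from by nth_rewrite 2 [← h2]; rw [hxU], dotProduct]
    refine Finset.sum_congr rfl fun i _ => ?_
    ring

private lemma aux_trace_eq (A : Matrix (Fin d) (Fin d) ℝ) (hA : A.IsHermitian) :
    A.trace = ∑ i, hA.eigenvalues i := by
  have h1 : star (hA.eigenvectorUnitary : Matrix (Fin d) (Fin d) ℝ) * hA.eigenvectorUnitary = 1 :=
    Matrix.mem_unitaryGroup_iff'.mp hA.eigenvectorUnitary.2
  conv_lhs => rw [hA.spectral_theorem, Unitary.conjStarAlgAut_apply]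
  rw [Matrix.trace_mul_cycle, h1, Matrix.one_mul]
  simp [Matrix.trace_diagonal]

private lemma aux_dp_pos (x : Fin d → ℝ) (hx : x ≠ 0) : 0 < x ⬝ᵥ x := by
  have h0 : 0 ≤ x ⬝ᵥ x := Finset.sum_nonneg fun i _ => mul_self_nonneg _
  exact h0.lt_of_ne fun h => hx (dotProduct_self_eq_zero.1 h.symm)

private lemma aux_vvx (v x : Fin d → ℝ) : x ⬝ᵥ (Matrix.vecMulVec v v *ᵥ x) = (v ⬝ᵥ x)^2 := by
  simp only [dotProduct, Matrix.mulVec, Matrix.vecMulVec_apply]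
  rw [sq, Finset.sum_mul]
  refine Finset.sum_congr rfl fun i _ => ?_
  rw [Finset.mul_sum, Finset.mul_sum]
  exact Finset.sum_congr rfl fun j _ => by ring

end Aux
open Matrix

/-- The operator norm of a real symmetric matrix: the largest absolute value of an eigenvalue. -/
noncomputable def opNorm {d : ℕ} (A : Matrix (Fin d) (Fin d) ℝ) : ℝ :=
  sSup {r : ℝ | ∃ (μ : ℝ) (x : Fin d → ℝ), x ≠ 0 ∧ A.mulVec x = μ • x ∧ r = |μ|}

theorem stmt_3 {d : ℕ} (hd : 2 ≤ d)
    (v : Fin d → ℝ) (u : Matrix (Fin d) (Fin d) ℝ)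
    (hus : u.IsSymm) (hut : u.trace = 0) :
    opNorm u ≤ 2 * (((d : ℝ) - 1) / d) * genE v u ∧ 0 ≤ genE v u := by
  have hdpos : 0 < d := by omega
  haveI : Nonempty (Fin d) := ⟨⟨0, hdpos⟩⟩
  -- Hermitian structure
  have hu : u.IsHermitian := by
    rwa [Matrix.IsHermitian, Matrix.conjTranspose_eq_transpose_of_trivial]
  have hvv : (Matrix.vecMulVec v v).IsHermitian := by
    rw [Matrix.IsHermitian, Matrix.conjTranspose_eq_transpose_of_trivial]
    ext i j
    simp [Matrix.vecMulVec_apply, mul_comm]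
  set A : Matrix (Fin d) (Fin d) ℝ := Matrix.vecMulVec v v - u with hAdef
  have hA : A.IsHermitian := hvv.sub hu
  set M : ℝ := lambdaMax A with hM
  -- lambdaMax as sup over the finite range of eigenvalues
  have hset : {μ : ℝ | ∃ x : Fin d → ℝ, x ≠ 0 ∧ A.mulVec x = μ • x} = Set.range hA.eigenvalues :=
    aux_eigen_set A hA
  have hMle : ∀ i, hA.eigenvalues i ≤ M := by
    intro i
    rw [hM, lambdaMax, hset]
    exact le_csSup ((Set.finite_range _).bddAbove) (Set.mem_range_self i)
  -- M ≥ 0 from the trace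
  have htraceA : A.trace = ∑ i, (v i)^2 := by
    rw [hAdef, Matrix.trace_sub, hut, sub_zero]
    simp [Matrix.trace, Matrix.vecMulVec_apply, sq]
  have hsumA : ∑ i, hA.eigenvalues i = ∑ i, (v i)^2 := by
    rw [← aux_trace_eq A hA, htraceA]
  have hM0 : 0 ≤ M := by
    by_contra h
    push_neg at h
    have : ∑ i, hA.eigenvalues i < 0 := by
      calc ∑ i, hA.eigenvalues i ≤ ∑ _i : Fin d, M := Finset.sum_le_sum fun i _ => hMle i
        _ = d * M := by rw [Finset.sum_const]; simp [mul_comm]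
        _ < 0 := by
          have : (0:ℝ) < d := by exact_mod_cast hdpos
          nlinarith
    rw [hsumA] at this
    exact absurd this (not_lt.2 (Finset.sum_nonneg fun i _ => sq_nonneg _))
  -- Rayleigh bound: xᵀ A x ≤ M |x|²
  have hray : ∀ x : Fin d → ℝ, dotProduct x (A *ᵥ x) ≤ M * dotProduct x x := by
    intro x
    obtain ⟨y, h1, h2⟩ := aux_quad_eq A hA x
    rw [h1, h2, Finset.mul_sum]
    exact Finset.sum_le_sum fun i _ =>
      mul_le_mul_of_nonneg_right (hMle i) (sq_nonneg _)
  -- every eigenvalue of u is ≥ -M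
  have hlb : ∀ μ : ℝ, (∃ x : Fin d → ℝ, x ≠ 0 ∧ u.mulVec x = μ • x) → -M ≤ μ := by
    rintro μ ⟨x, hx, hux⟩
    have hxx : 0 < dotProduct x x := aux_dp_pos x hx
    have hq : dotProduct x (u *ᵥ x) = μ * dotProduct x x := by
      rw [hux, dotProduct_smul, smul_eq_mul]
    have hsplit : dotProduct x (u *ᵥ x)
        = dotProduct x (Matrix.vecMulVec v v *ᵥ x) - dotProduct x (A *ᵥ x) := by
      rw [hAdef, Matrix.sub_mulVec]
      simp [dotProduct_sub]
    have h1 : μ * dotProduct x x ≥ -(M * dotProduct x x) := by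
      rw [← hq, hsplit]
      have := hray x
      have h2 := aux_vvx v x
      nlinarith [sq_nonneg (dotProduct v x)]
    nlinarith
  -- each eigenvalue of u bounded
  have hsumu : ∑ i, hu.eigenvalues i = 0 := by rw [← aux_trace_eq u hu, hut]
  have hulb : ∀ i, -M ≤ hu.eigenvalues i := by
    intro i
    apply hlb
    have : hu.eigenvalues i ∈ {μ : ℝ | ∃ x : Fin d → ℝ, x ≠ 0 ∧ u.mulVec x = μ • x} := by
      rw [aux_eigen_set u hu]; exact Set.mem_range_self i
    exact this
  have hub : ∀ i, hu.eigenvalues i ≤ ((d:ℝ) - 1) * M := by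
    intro j
    have hsplit : hu.eigenvalues j = -∑ i ∈ Finset.univ.erase j, hu.eigenvalues i := by
      have := Finset.add_sum_erase Finset.univ hu.eigenvalues (Finset.mem_univ j)
      rw [hsumu] at this
      linarith
    rw [hsplit]
    have hcard : (Finset.univ.erase j).card = d - 1 := by
      rw [Finset.card_erase_of_mem (Finset.mem_univ j), Finset.card_univ, Fintype.card_fin]
    have : -((d:ℝ) - 1) * M ≤ ∑ i ∈ Finset.univ.erase j, hu.eigenvalues i := by
      calc -((d:ℝ) - 1) * M = ∑ _i ∈ Finset.univ.erase j, (-M) := by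
            rw [Finset.sum_const, hcard]
            have : ((d - 1 : ℕ) : ℝ) = (d : ℝ) - 1 := by
              have : (1:ℕ) ≤ d := by omega
              push_cast [Nat.cast_sub this]; ring
            simp [this]; ring
        _ ≤ _ := Finset.sum_le_sum fun i _ => hulb i
    linarith
  have habs : ∀ i, |hu.eigenvalues i| ≤ ((d:ℝ) - 1) * M := by
    intro i
    rw [abs_le]
    constructor
    · have hd1 : (1:ℝ) ≤ (d:ℝ) - 1 := by
        have : (2:ℝ) ≤ d := by exact_mod_cast hd
        linarith
      have := hulb i
      nlinarith
    · exact hub i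
  -- conclude
  have hgen : genE v u = ((d:ℝ)/2) * M := rfl
  constructor
  · have hrhs : 2 * (((d : ℝ) - 1) / d) * genE v u = ((d:ℝ) - 1) * M := by
      rw [hgen]
      have hdne : (d:ℝ) ≠ 0 := by positivity
      field_simp
    rw [hrhs, opNorm]
    apply csSup_le
    · refine ⟨|hu.eigenvalues ⟨0, hdpos⟩|, hu.eigenvalues ⟨0, hdpos⟩, ?_⟩
      have : hu.eigenvalues ⟨0, hdpos⟩ ∈
          {μ : ℝ | ∃ x : Fin d → ℝ, x ≠ 0 ∧ u.mulVec x = μ • x} := by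
        rw [aux_eigen_set u hu]; exact Set.mem_range_self _
      obtain ⟨x, hx, hux⟩ := this
      exact ⟨x, hx, hux, rfl⟩
    · rintro r ⟨μ, x, hx, hux, rfl⟩
      have : μ ∈ Set.range hu.eigenvalues := by
        rw [← aux_eigen_set u hu]; exact ⟨x, hx, hux⟩
      obtain ⟨i, rfl⟩ := this
      exact habs i
  · rw [hgen]
    positivity
end
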